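/- Let N ≥ 2 be an integer not divisible by 3, let λ ∈ ℝ with |λ| < λ_c, and let α₀, α₁, α₂ be the three distinct real roots of ξ³ − ξ − λ. Let a₀ ≤ a₁ ≤ a₂ be nonnegative integers with a₀ + a₁ + a₂ = N and a₀α₀ + a₁α₁ + a₂α₂ = 0, and let x* ∈ ℝ^N be any point having exactly aⱼ coordinates equal to αⱼ for j = 0, 1, 2 (so x* ∈ S, and x* is a stationary point of V_0 restricted to S). Then: if 2a₁ > a₀ + a₂, the maximal dimension of a subspace of S on which the Hessian quadratic form of V_0 restricted to S at x* is negative definite equals a₀; if 2a₁ < a₀ + a₂, this maximal dimension equals a₂ − 1. In other words, x* is a stationary point of index a₀, respectively a₂ − 1, of the constrained potential. -/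

import Mathlib

open Module

noncomputable def sumF (N : ℕ) : (Fin N → ℝ) →ₗ[ℝ] ℝ where
  toFun v := ∑ i, v i
  map_add' u v := by simp [Finset.sum_add_distrib]
  map_smul' r v := by simp [Finset.mul_sum]

@[simp] lemma sumF_apply {N : ℕ} (v : Fin N → ℝ) : sumF N v = ∑ i, v i := rfl

open Classical in
noncomputable def extE {N : ℕ} (s : Set (Fin N)) : (s → ℝ) →ₗ[ℝ] (Fin N → ℝ) where
  toFun f i := if h : i ∈ s then f ⟨i, h⟩ else 0
  map_add' u v := by funext i; by_cases h : i ∈ s <;> simp [h]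
  map_smul' r v := by funext i; by_cases h : i ∈ s <;> simp [h]

lemma extE_apply_mem {N : ℕ} {s : Set (Fin N)} (f : s → ℝ) {i : Fin N} (h : i ∈ s) :
    extE s f i = f ⟨i, h⟩ := by simp [extE, h]

lemma extE_apply_not_mem {N : ℕ} {s : Set (Fin N)} (f : s → ℝ) {i : Fin N} (h : i ∉ s) :
    extE s f i = 0 := by simp [extE, h]

lemma extE_injective {N : ℕ} (s : Set (Fin N)) : Function.Injective (extE s) := by
  intro f g h
  funext ⟨i, hi⟩
  have := congrFun h i
  rwa [extE_apply_mem f hi, extE_apply_mem g hi] at this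

lemma finrank_set_fun {N : ℕ} (s : Set (Fin N)) : finrank ℝ (s → ℝ) = s.ncard := by
  classical
  rw [Module.finrank_fintype_fun_eq_card, ← Nat.card_coe_set_eq, Nat.card_eq_fintype_card]

lemma dim_le_neg {N : ℕ} (c : Fin N → ℝ) (W : Submodule ℝ (Fin N → ℝ))
    (hW : ∀ v ∈ W, v ≠ 0 → ∑ i, c i * v i ^ 2 < 0) :
    finrank ℝ W ≤ {i | c i < 0}.ncard := by
  classical
  set s := {i | c i < 0} with hs
  let L : W →ₗ[ℝ] (s → ℝ) :=
    { toFun := fun v i => (v : Fin N → ℝ) i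
      map_add' := fun u v => rfl
      map_smul' := fun r v => rfl }
  have hinj : Function.Injective L := by
    rw [injective_iff_map_eq_zero]
    intro v hv
    by_contra hne
    have hvne : (v : Fin N → ℝ) ≠ 0 := by
      intro h0; exact hne (Subtype.ext h0)
    have h1 : ∀ i : Fin N, c i < 0 → (v : Fin N → ℝ) i = 0 := by
      intro i hi
      exact congrFun hv ⟨i, hi⟩
    have h2 : (0:ℝ) ≤ ∑ i, c i * (v : Fin N → ℝ) i ^ 2 := by
      apply Finset.sum_nonneg
      intro i _
      by_cases h : c i < 0
      · rw [h1 i h]; ring_nf; simp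
      · exact mul_nonneg (le_of_not_gt h) (sq_nonneg _)
    exact absurd (hW v v.2 hvne) (not_lt.mpr h2)
  calc finrank ℝ W ≤ finrank ℝ (s → ℝ) := LinearMap.finrank_le_finrank_of_injective hinj
    _ = s.ncard := finrank_set_fun s

lemma expand_sum {N : ℕ} (c : Fin N → ℝ) (hc : ∀ i, c i ≠ 0) (u : Fin N → ℝ) (σ : ℝ) :
    ∑ i, c i * (u i - σ * (c i)⁻¹) ^ 2
      = ∑ i, c i * u i ^ 2 - 2 * σ * (∑ i, u i) + σ ^ 2 * ∑ i, (c i)⁻¹ := by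
  have h : ∀ i : Fin N, c i * (u i - σ * (c i)⁻¹) ^ 2
      = c i * u i ^ 2 - 2 * σ * u i + σ ^ 2 * (c i)⁻¹ := by
    intro i
    have hci := hc i
    field_simp
    ring
  rw [Finset.sum_congr rfl (fun i _ => h i)]
  rw [Finset.sum_add_distrib, Finset.sum_sub_distrib, ← Finset.mul_sum, ← Finset.mul_sum]

/-- negativity of the quadratic form on functions supported on the negative set -/
lemma q_neg_of_supported {N : ℕ} (c : Fin N → ℝ) (u : Fin N → ℝ)
    (hsupp : ∀ i, ¬ c i < 0 → u i = 0) (hu : u ≠ 0) :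
    ∑ i, c i * u i ^ 2 < 0 := by
  obtain ⟨i₀, hi₀⟩ : ∃ i, u i ≠ 0 := by
    by_contra h; push_neg at h; exact hu (funext h)
  have hi₀neg : c i₀ < 0 := by
    by_contra h; exact hi₀ (hsupp i₀ h)
  have : ∑ i, c i * u i ^ 2 < ∑ i : Fin N, (0:ℝ) := by
    apply Finset.sum_lt_sum
    · intro i _
      by_cases h : c i < 0
      · exact mul_nonpos_of_nonpos_of_nonneg (le_of_lt h) (sq_nonneg _)
      · rw [hsupp i h]; ring_nf; simp
    · exact ⟨i₀, Finset.mem_univ _,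
        mul_neg_of_neg_of_pos hi₀neg (by positivity)⟩
  simpa using this

lemma master_pos {N : ℕ} (c : Fin N → ℝ) (hc : ∀ i, c i ≠ 0)
    (hS : 0 < ∑ i, (c i)⁻¹) :
    IsGreatest {d : ℕ | ∃ W : Submodule ℝ (Fin N → ℝ),
      (∀ v ∈ W, ∑ i, v i = 0) ∧ finrank ℝ W = d ∧
      (∀ v ∈ W, v ≠ 0 → ∑ i, c i * v i ^ 2 < 0)} {i | c i < 0}.ncard := by
  classical
  set s := {i | c i < 0} with hs
  set S := ∑ i, (c i)⁻¹ with hSdef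
  have hSne : S ≠ 0 := ne_of_gt hS
  set w : Fin N → ℝ := fun i => (c i)⁻¹ with hw
  -- the correction map
  let T : (Fin N → ℝ) →ₗ[ℝ] (Fin N → ℝ) :=
    LinearMap.id - LinearMap.smulRight (S⁻¹ • sumF N) w
  have hT : ∀ (u : Fin N → ℝ) (i : Fin N),
      T u i = u i - (S⁻¹ * ∑ j, u j) * (c i)⁻¹ := by
    intro u i
    simp [T, w, smul_eq_mul]
  constructor
  · -- membership
    refine ⟨LinearMap.range (T ∘ₗ extE s), ?_, ?_, ?_⟩
    · rintro v ⟨f, rfl⟩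
      set u := extE s f with hu
      have : ∀ i, (T ∘ₗ extE s) f i = u i - (S⁻¹ * ∑ j, u j) * (c i)⁻¹ := fun i => hT u i
      rw [Finset.sum_congr rfl (fun i _ => this i), Finset.sum_sub_distrib, ← Finset.mul_sum]
      show (∑ x, u x) - (S⁻¹ * ∑ j, u j) * S = 0
      have hcancel : (S⁻¹ * ∑ j, u j) * S = ∑ j, u j := by field_simp
      linarith [hcancel]
    · rw [LinearMap.finrank_range_of_inj, finrank_set_fun]
      -- injectivity
      intro f g hfg
      -- reduce to T injective on the relevant set
      have key : ∀ h : s → ℝ, T (extE s h) = 0 → extE s h = 0 := by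
        intro h h0
        -- find a coordinate outside s
        obtain ⟨i₀, hi₀⟩ : ∃ i, i ∉ s := by
          by_contra hcon; push_neg at hcon
          have hneg : ∀ i, (c i)⁻¹ < 0 := fun i => inv_lt_zero.mpr (hcon i)
          have hN0 : N ≠ 0 := by
            rintro rfl
            simp only [hSdef] at hS
            simp at hS
          have hlt : S < 0 := by
            rw [hSdef]
            exact Finset.sum_neg (fun i _ => hneg i)
              ⟨⟨0, Nat.pos_of_ne_zero hN0⟩, Finset.mem_univ _⟩
          linarith
        set σ := S⁻¹ * ∑ j, extE s h j with hσ
        have h1 : extE s h i₀ - σ * (c i₀)⁻¹ = 0 := by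
          have := congrFun h0 i₀
          rwa [hT (extE s h) i₀] at this
        rw [extE_apply_not_mem h hi₀] at h1
        have hσ0 : σ = 0 := by
          have hcinv : (c i₀)⁻¹ ≠ 0 := inv_ne_zero (hc i₀)
          have : σ * (c i₀)⁻¹ = 0 := by linarith
          exact (mul_eq_zero.mp this).resolve_right hcinv
        funext i
        have := congrFun h0 i
        rw [hT (extE s h) i, ← hσ, hσ0] at this
        simpa using this
      have h1 : extE s (f - g) = 0 := key _ (by
        rw [map_sub, map_sub, sub_eq_zero]; exact hfg)
      have h2 := extE_injective s (h1.trans (map_zero (extE s)).symm)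
      exact sub_eq_zero.mp h2
    · rintro v ⟨f, rfl⟩ hvne
      set u := extE s f with hu
      set σ := S⁻¹ * ∑ j, u j with hσ
      have hvi : ∀ i, (T ∘ₗ extE s) f i = u i - σ * (c i)⁻¹ := fun i => hT u i
      have hQ : ∑ i, c i * ((T ∘ₗ extE s) f i) ^ 2
          = ∑ i, c i * u i ^ 2 - 2 * σ * (∑ j, u j) + σ ^ 2 * S := by
        rw [Finset.sum_congr rfl (fun i _ => by rw [hvi i])]
        exact expand_sum c hc u σ
      have hune : u ≠ 0 := by
        intro h0
        apply hvne
        have : (T ∘ₗ extE s) f = T u := rfl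
        rw [this, h0, map_zero]
      have hQu : ∑ i, c i * u i ^ 2 < 0 := by
        apply q_neg_of_supported c u _ hune
        intro i hi
        exact extE_apply_not_mem f hi
      have hrest : - 2 * σ * (∑ j, u j) + σ ^ 2 * S ≤ 0 := by
        rw [hσ]
        have : S⁻¹ * (∑ j, u j) * (∑ j, u j) = (∑ j, u j)^2 / S := by
          field_simp
        have hsq : (∑ j, u j)^2 / S ≥ 0 := div_nonneg (sq_nonneg _) (le_of_lt hS)
        have hexp : -2 * (S⁻¹ * ∑ j, u j) * (∑ j, u j) + (S⁻¹ * ∑ j, u j) ^ 2 * S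
            = -((∑ j, u j)^2 / S) := by
          field_simp
          ring
        rw [hexp]
        linarith
      rw [hQ]
      linarith
  · rintro d ⟨W, hWsum, hWrank, hWneg⟩
    rw [← hWrank]
    exact dim_le_neg c W hWneg

lemma expand_sum' {N : ℕ} (c : Fin N → ℝ) (hc : ∀ i, c i ≠ 0) (u : Fin N → ℝ) (σ : ℝ) :
    ∑ i, c i * (u i + σ * (c i)⁻¹) ^ 2
      = ∑ i, c i * u i ^ 2 + 2 * σ * (∑ i, u i) + σ ^ 2 * ∑ i, (c i)⁻¹ := by
  have h := expand_sum c hc u (-σ)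
  simp only [neg_mul, sub_neg_eq_add] at h
  rw [h]; ring

lemma master_neg {N : ℕ} (c : Fin N → ℝ) (hc : ∀ i, c i ≠ 0)
    (hS : ∑ i, (c i)⁻¹ < 0) (hne : {i | c i < 0}.Nonempty) :
    IsGreatest {d : ℕ | ∃ W : Submodule ℝ (Fin N → ℝ),
      (∀ v ∈ W, ∑ i, v i = 0) ∧ finrank ℝ W = d ∧
      (∀ v ∈ W, v ≠ 0 → ∑ i, c i * v i ^ 2 < 0)} ({i | c i < 0}.ncard - 1) := by
  classical
  set s := {i | c i < 0} with hs
  set S := ∑ i, (c i)⁻¹ with hSdef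
  have hSne : S ≠ 0 := ne_of_lt hS
  constructor
  · -- membership
    set ψ : (↥s → ℝ) →ₗ[ℝ] ℝ := (sumF N).comp (extE s) with hψ
    refine ⟨(LinearMap.ker ψ).map (extE s), ?_, ?_, ?_⟩
    · rintro v ⟨f, hf, rfl⟩
      exact hf
    · -- rank computation
      have e1 : finrank ℝ ((LinearMap.ker ψ).map (extE s)) = finrank ℝ (LinearMap.ker ψ) :=
        (LinearEquiv.finrank_eq
          (Submodule.equivMapOfInjective (extE s) (extE_injective s) (LinearMap.ker ψ))).symm
      -- ψ is surjective
      obtain ⟨i₀, hi₀⟩ := hne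
      have hi₀s : i₀ ∈ s := hi₀
      set f₀ : ↥s → ℝ := fun j => if (j : Fin N) = i₀ then (1:ℝ) else 0 with hf₀
      have hψf₀ : ψ f₀ = 1 := by
        show ∑ i, extE s f₀ i = 1
        have : ∀ i : Fin N, extE s f₀ i = if i = i₀ then (1:ℝ) else 0 := by
          intro i
          by_cases h : i ∈ s
          · rw [extE_apply_mem f₀ h]
          · rw [extE_apply_not_mem f₀ h]
            have : i ≠ i₀ := by rintro rfl; exact h hi₀s
            simp [this]
        rw [Finset.sum_congr rfl (fun i _ => this i)]
        simp
      have hsurj : Function.Surjective ψ := by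
        intro r
        refine ⟨r • f₀, ?_⟩
        rw [map_smul, hψf₀, smul_eq_mul, mul_one]
      have e2 : finrank ℝ (LinearMap.range ψ) = 1 := by
        rw [LinearMap.range_eq_top.mpr hsurj, finrank_top, finrank_self]
      have e3 := LinearMap.finrank_range_add_finrank_ker ψ
      rw [e2, finrank_set_fun] at e3
      rw [e1]
      omega
    · rintro v ⟨f, _, rfl⟩ hvne
      apply q_neg_of_supported c _ _ hvne
      intro i hi
      exact extE_apply_not_mem f hi
  · rintro d ⟨W, hWsum, hWrank, hWneg⟩
    set w : Fin N → ℝ := fun i => (c i)⁻¹ with hw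
    have hwW : w ∉ W := by
      intro h
      have := hWsum w h
      rw [show (∑ i, w i) = S from rfl] at this
      exact hSne this
    have hwW' : w ∈ W ⊔ Submodule.span ℝ {w} :=
      Submodule.mem_sup_right (Submodule.mem_span_singleton_self w)
    have hlt : W < W ⊔ Submodule.span ℝ {w} :=
      lt_of_le_of_ne le_sup_left (fun h => hwW (h ▸ hwW'))
    have hneg' : ∀ v ∈ W ⊔ Submodule.span ℝ {w}, v ≠ 0 → ∑ i, c i * v i ^ 2 < 0 := by
      intro v hv hvne
      obtain ⟨y, hy, z, hz, rfl⟩ := Submodule.mem_sup.mp hv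
      obtain ⟨r, rfl⟩ := Submodule.mem_span_singleton.mp hz
      have hpt : ∀ i : Fin N, (y + r • w) i = y i + r * (c i)⁻¹ := by
        intro i; simp [hw, smul_eq_mul]
      have hQ : ∑ i, c i * ((y + r • w) i) ^ 2
          = ∑ i, c i * y i ^ 2 + 2 * r * (∑ i, y i) + r ^ 2 * S := by
        rw [Finset.sum_congr rfl (fun i _ => by rw [hpt i])]
        exact expand_sum' c hc y r
      rw [hQ, hWsum y hy]
      by_cases hy0 : y = 0
      · have hr : r ≠ 0 := by
          rintro rfl
          apply hvne
          rw [hy0]; simp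
        have : r ^ 2 * S < 0 := mul_neg_of_pos_of_neg (by positivity) hS
        rw [hy0]
        simpa using this
      · have h1 : ∑ i, c i * y i ^ 2 < 0 := hWneg y hy hy0
        have h2 : r ^ 2 * S ≤ 0 := mul_nonpos_of_nonneg_of_nonpos (sq_nonneg r) (le_of_lt hS)
        nlinarith
    have hd1 : finrank ℝ W < finrank ℝ (W ⊔ Submodule.span ℝ {w} : Submodule ℝ (Fin N → ℝ)) :=
      Submodule.finrank_lt_finrank_of_lt hlt
    have hd2 := dim_le_neg c _ hneg'
    rw [← hs] at hd2
    omega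

lemma cover_lemma {N : ℕ} (x : Fin N → ℝ) (α₀ α₁ α₂ : ℝ)
    (h01 : α₀ ≠ α₁) (h02 : α₀ ≠ α₂) (h12 : α₁ ≠ α₂)
    (hcard : {i | x i = α₀}.ncard + {i | x i = α₁}.ncard + {i | x i = α₂}.ncard = N) :
    ∀ i, x i = α₀ ∨ x i = α₁ ∨ x i = α₂ := by
  classical
  set F₀ : Finset (Fin N) := Finset.univ.filter (fun i => x i = α₀) with hF₀
  set F₁ : Finset (Fin N) := Finset.univ.filter (fun i => x i = α₁) with hF₁
  set F₂ : Finset (Fin N) := Finset.univ.filter (fun i => x i = α₂) with hF₂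
  have e₀ : {i | x i = α₀}.ncard = F₀.card := by
    rw [← Set.ncard_coe_finset]; congr 1; ext i; simp [hF₀]
  have e₁ : {i | x i = α₁}.ncard = F₁.card := by
    rw [← Set.ncard_coe_finset]; congr 1; ext i; simp [hF₁]
  have e₂ : {i | x i = α₂}.ncard = F₂.card := by
    rw [← Set.ncard_coe_finset]; congr 1; ext i; simp [hF₂]
  have hd01 : Disjoint F₀ F₁ := by
    rw [Finset.disjoint_left]
    intro i hi hj
    rw [hF₀, Finset.mem_filter] at hi
    rw [hF₁, Finset.mem_filter] at hj
    exact h01 (hi.2.symm.trans hj.2)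
  have hd012 : Disjoint (F₀ ∪ F₁) F₂ := by
    rw [Finset.disjoint_left]
    intro i hi hj
    rw [hF₂, Finset.mem_filter] at hj
    rcases Finset.mem_union.mp hi with hi | hi
    · rw [hF₀, Finset.mem_filter] at hi
      exact h02 (hi.2.symm.trans hj.2)
    · rw [hF₁, Finset.mem_filter] at hi
      exact h12 (hi.2.symm.trans hj.2)
  have hcards : (F₀ ∪ F₁ ∪ F₂).card = N := by
    rw [Finset.card_union_of_disjoint hd012, Finset.card_union_of_disjoint hd01]
    rw [e₀, e₁, e₂] at hcard
    omega
  have huniv : F₀ ∪ F₁ ∪ F₂ = Finset.univ := by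
    apply Finset.eq_univ_of_card
    rw [hcards, Fintype.card_fin]
  intro i
  have hi : i ∈ F₀ ∪ F₁ ∪ F₂ := huniv ▸ Finset.mem_univ i
  rcases Finset.mem_union.mp hi with hi | hi
  · rcases Finset.mem_union.mp hi with hi | hi
    · exact Or.inl (Finset.mem_filter.mp hi).2
    · exact Or.inr (Or.inl (Finset.mem_filter.mp hi).2)
  · exact Or.inr (Or.inr (Finset.mem_filter.mp hi).2)

lemma sum_partition {N : ℕ} (x : Fin N → ℝ) (α₀ α₁ α₂ : ℝ)
    (h01 : α₀ ≠ α₁) (h02 : α₀ ≠ α₂) (h12 : α₁ ≠ α₂)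
    (hcard : {i | x i = α₀}.ncard + {i | x i = α₁}.ncard + {i | x i = α₂}.ncard = N)
    (f : ℝ → ℝ) :
    ∑ i, f (x i) = ({i | x i = α₀}.ncard : ℝ) * f α₀ + ({i | x i = α₁}.ncard : ℝ) * f α₁
      + ({i | x i = α₂}.ncard : ℝ) * f α₂ := by
  classical
  set F₀ : Finset (Fin N) := Finset.univ.filter (fun i => x i = α₀) with hF₀
  set F₁ : Finset (Fin N) := Finset.univ.filter (fun i => x i = α₁) with hF₁
  set F₂ : Finset (Fin N) := Finset.univ.filter (fun i => x i = α₂) with hF₂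
  have e₀ : {i | x i = α₀}.ncard = F₀.card := by
    rw [← Set.ncard_coe_finset]; congr 1; ext i; simp [hF₀]
  have e₁ : {i | x i = α₁}.ncard = F₁.card := by
    rw [← Set.ncard_coe_finset]; congr 1; ext i; simp [hF₁]
  have e₂ : {i | x i = α₂}.ncard = F₂.card := by
    rw [← Set.ncard_coe_finset]; congr 1; ext i; simp [hF₂]
  have hd01 : Disjoint F₀ F₁ := by
    rw [Finset.disjoint_left]
    intro i hi hj
    rw [hF₀, Finset.mem_filter] at hi
    rw [hF₁, Finset.mem_filter] at hj
    exact h01 (hi.2.symm.trans hj.2)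
  have hd012 : Disjoint (F₀ ∪ F₁) F₂ := by
    rw [Finset.disjoint_left]
    intro i hi hj
    rw [hF₂, Finset.mem_filter] at hj
    rcases Finset.mem_union.mp hi with hi | hi
    · rw [hF₀, Finset.mem_filter] at hi
      exact h02 (hi.2.symm.trans hj.2)
    · rw [hF₁, Finset.mem_filter] at hi
      exact h12 (hi.2.symm.trans hj.2)
  have hcards : (F₀ ∪ F₁ ∪ F₂).card = N := by
    rw [Finset.card_union_of_disjoint hd012, Finset.card_union_of_disjoint hd01]
    rw [e₀, e₁, e₂] at hcard
    omega
  have huniv : F₀ ∪ F₁ ∪ F₂ = Finset.univ := by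
    apply Finset.eq_univ_of_card
    rw [hcards, Fintype.card_fin]
  have hs₀ : ∑ i ∈ F₀, f (x i) = (F₀.card : ℝ) * f α₀ := by
    rw [Finset.sum_congr rfl (fun i hi => by rw [(Finset.mem_filter.mp hi).2])]
    rw [Finset.sum_const, nsmul_eq_mul]
  have hs₁ : ∑ i ∈ F₁, f (x i) = (F₁.card : ℝ) * f α₁ := by
    rw [Finset.sum_congr rfl (fun i hi => by rw [(Finset.mem_filter.mp hi).2])]
    rw [Finset.sum_const, nsmul_eq_mul]
  have hs₂ : ∑ i ∈ F₂, f (x i) = (F₂.card : ℝ) * f α₂ := by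
    rw [Finset.sum_congr rfl (fun i hi => by rw [(Finset.mem_filter.mp hi).2])]
    rw [Finset.sum_const, nsmul_eq_mul]
  rw [e₀, e₁, e₂]
  calc ∑ i, f (x i) = ∑ i ∈ F₀ ∪ F₁ ∪ F₂, f (x i) := by rw [huniv]
    _ = _ := by
      rw [Finset.sum_union hd012, Finset.sum_union hd01, hs₀, hs₁, hs₂]

lemma exists_t (α₀ α₁ α₂ A₀ A₁ A₂ : ℝ) (h01 : α₀ ≠ α₁)
    (hA : A₀ + A₁ + A₂ = 0) (hAα : A₀*α₀ + A₁*α₁ + A₂*α₂ = 0) :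
    ∃ t, A₀ = t*(α₁-α₂) ∧ A₁ = t*(α₂-α₀) ∧ A₂ = t*(α₀-α₁) := by
  have hd : α₀ - α₁ ≠ 0 := sub_ne_zero.mpr h01
  refine ⟨A₂/(α₀-α₁), ?_, ?_, ?_⟩
  · have key : A₁*(α₀-α₁) = A₂*(α₂-α₀) := by linear_combination α₀*hA - hAα
    field_simp
    linear_combination (α₀-α₁)*hA - key
  · have key : A₁*(α₀-α₁) = A₂*(α₂-α₀) := by linear_combination α₀*hA - hAα
    field_simp
    linear_combination key
  · field_simp

set_option maxHeartbeats 3200000 in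
/-- Index of the stationary points of the uncoupled constrained potential:
a stationary point with multiplicity triple `(a₀, a₁, a₂)` has index `a₀` if
`2a₁ > a₀ + a₂`, and index `a₂ - 1` if `2a₁ < a₀ + a₂`.  The index is formalised as the
maximal dimension of a subspace of the zero-mean hyperplane on which the Hessian quadratic
form `v ↦ Σᵢ (3(x*ᵢ)² - 1)vᵢ²` is negative definite. -/
theorem stmt_1 (N : ℕ) (hN : 2 ≤ N) (hN3 : ¬(3 ∣ N))
    (lam : ℝ) (hlam : |lam| < 2 / (3 * Real.sqrt 3))
    (α₀ α₁ α₂ : ℝ) (h01 : α₀ ≠ α₁) (h02 : α₀ ≠ α₂) (h12 : α₁ ≠ α₂)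
    (hr0 : α₀ ^ 3 - α₀ = lam) (hr1 : α₁ ^ 3 - α₁ = lam) (hr2 : α₂ ^ 3 - α₂ = lam)
    (a₀ a₁ a₂ : ℕ) (ha01 : a₀ ≤ a₁) (ha12 : a₁ ≤ a₂) (hsum : a₀ + a₁ + a₂ = N)
    (hmean : (a₀ : ℝ) * α₀ + (a₁ : ℝ) * α₁ + (a₂ : ℝ) * α₂ = 0)
    (x : Fin N → ℝ)
    (hc0 : {i | x i = α₀}.ncard = a₀) (hc1 : {i | x i = α₁}.ncard = a₁)
    (hc2 : {i | x i = α₂}.ncard = a₂) :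
    (2 * a₁ > a₀ + a₂ →
      IsGreatest {d : ℕ | ∃ W : Submodule ℝ (Fin N → ℝ),
        (∀ v ∈ W, ∑ i, v i = 0) ∧ Module.finrank ℝ W = d ∧
        (∀ v ∈ W, v ≠ 0 → ∑ i, (3 * (x i) ^ 2 - 1) * (v i) ^ 2 < 0)} a₀) ∧
    (2 * a₁ < a₀ + a₂ →
      IsGreatest {d : ℕ | ∃ W : Submodule ℝ (Fin N → ℝ),
        (∀ v ∈ W, ∑ i, v i = 0) ∧ Module.finrank ℝ W = d ∧
        (∀ v ∈ W, v ≠ 0 → ∑ i, (3 * (x i) ^ 2 - 1) * (v i) ^ 2 < 0)} (a₂ - 1)) := by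
  classical
  have hd01 : α₀ - α₁ ≠ 0 := sub_ne_zero.mpr h01
  have hd02 : α₀ - α₂ ≠ 0 := sub_ne_zero.mpr h02
  have hd12 : α₁ - α₂ ≠ 0 := sub_ne_zero.mpr h12
  have hd10 : α₁ - α₀ ≠ 0 := sub_ne_zero.mpr (Ne.symm h01)
  have hd20 : α₂ - α₀ ≠ 0 := sub_ne_zero.mpr (Ne.symm h02)
  have hd21 : α₂ - α₁ ≠ 0 := sub_ne_zero.mpr (Ne.symm h12)
  have h01p : α₀^2 + α₀*α₁ + α₁^2 = 1 := by
    have hfac : (α₀ - α₁) * (α₀^2 + α₀*α₁ + α₁^2 - 1) = 0 := by linear_combination hr0 - hr1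
    rcases mul_eq_zero.mp hfac with h | h
    · exact absurd h hd01
    · linarith
  have h02p : α₀^2 + α₀*α₂ + α₂^2 = 1 := by
    have hfac : (α₀ - α₂) * (α₀^2 + α₀*α₂ + α₂^2 - 1) = 0 := by linear_combination hr0 - hr2
    rcases mul_eq_zero.mp hfac with h | h
    · exact absurd h hd02
    · linarith
  have hsym : α₀ + α₁ + α₂ = 0 := by
    have hfac : (α₁ - α₂) * (α₀ + α₁ + α₂) = 0 := by linear_combination h01p - h02p
    rcases mul_eq_zero.mp hfac with h | h
    · exact absurd h hd12
    · exact h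
  have he2 : α₀*α₁ + α₀*α₂ + α₁*α₂ = -1 := by linear_combination (α₀+α₁)*hsym - h01p
  have hc0K : 3*α₀^2 - 1 = (α₀-α₁)*(α₀-α₂) := by linear_combination 2*α₀*hsym - he2
  have hc1K : 3*α₁^2 - 1 = (α₁-α₀)*(α₁-α₂) := by linear_combination 2*α₁*hsym - he2
  have hc2K : 3*α₂^2 - 1 = (α₂-α₀)*(α₂-α₁) := by linear_combination 2*α₂*hsym - he2
  have hcard : {i | x i = α₀}.ncard + {i | x i = α₁}.ncard + {i | x i = α₂}.ncard = N := by
    rw [hc0, hc1, hc2]; exact hsum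
  have hcover := cover_lemma x α₀ α₁ α₂ h01 h02 h12 hcard
  have hsumR : (a₀:ℝ) + a₁ + a₂ = N := by exact_mod_cast hsum
  set A₀ : ℝ := 3*(a₀:ℝ) - N with hA₀d
  set A₁ : ℝ := 3*(a₁:ℝ) - N with hA₁d
  set A₂ : ℝ := 3*(a₂:ℝ) - N with hA₂d
  have hA : A₀ + A₁ + A₂ = 0 := by rw [hA₀d, hA₁d, hA₂d]; linarith
  have hAα : A₀*α₀ + A₁*α₁ + A₂*α₂ = 0 := by
    rw [hA₀d, hA₁d, hA₂d]; linear_combination 3*hmean - (N:ℝ)*hsym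
  obtain ⟨t, ht0, ht1, ht2⟩ := exists_t α₀ α₁ α₂ A₀ A₁ A₂ h01 hA hAα
  have hK0v : t^2*((α₀-α₁)*(α₀-α₂)) = -(A₁*A₂) := by
    linear_combination A₂*ht1 + (t*(α₂-α₀))*ht2
  have hK1v : t^2*((α₁-α₀)*(α₁-α₂)) = -(A₀*A₂) := by
    linear_combination A₂*ht0 + (t*(α₁-α₂))*ht2
  have hK2v : t^2*((α₂-α₀)*(α₂-α₁)) = -(A₀*A₁) := by
    linear_combination A₁*ht0 + (t*(α₁-α₂))*ht1
  have hA01R : A₀ ≤ A₁ := by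
    rw [hA₀d, hA₁d]
    have : (a₀:ℝ) ≤ a₁ := by exact_mod_cast ha01
    linarith
  have hA12R : A₁ ≤ A₂ := by
    rw [hA₁d, hA₂d]
    have : (a₁:ℝ) ≤ a₂ := by exact_mod_cast ha12
    linarith
  have h3sum : 3*((a₀:ℝ)*A₀ + a₁*A₁ + a₂*A₂) = A₀^2 + A₁^2 + A₂^2 := by
    rw [hA₀d, hA₁d, hA₂d]; linear_combination (3*(N:ℝ))*hsumR
  constructor
  · -- Case 1 : 2a₁ > a₀ + a₂, index a₀
    intro hgt
    have hA1pos : 0 < A₁ := by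
      rw [hA₁d]
      have h1 : N < 3*a₁ := by omega
      have h2 : (N:ℝ) < 3*(a₁:ℝ) := by exact_mod_cast h1
      linarith
    have hA2pos : 0 < A₂ := lt_of_lt_of_le hA1pos hA12R
    have hA0neg : A₀ < 0 := by linarith
    have htne : t ≠ 0 := by
      rintro rfl
      rw [zero_mul] at ht2
      linarith
    have ht2pos : 0 < t^2 := by positivity
    have hK0neg : (α₀-α₁)*(α₀-α₂) < 0 := by
      by_contra hcon
      push_neg at hcon
      have h1 : 0 ≤ t^2 * ((α₀-α₁)*(α₀-α₂)) := mul_nonneg ht2pos.le hcon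
      have h2 : 0 < A₁*A₂ := mul_pos hA1pos hA2pos
      rw [hK0v] at h1
      linarith
    have hK1pos : 0 < (α₁-α₀)*(α₁-α₂) := by
      by_contra hcon
      push_neg at hcon
      have h1 : t^2 * ((α₁-α₀)*(α₁-α₂)) ≤ 0 := mul_nonpos_of_nonneg_of_nonpos ht2pos.le hcon
      have h2 : A₀*A₂ < 0 := mul_neg_of_neg_of_pos hA0neg hA2pos
      rw [hK1v] at h1
      linarith
    have hK2pos : 0 < (α₂-α₀)*(α₂-α₁) := by
      by_contra hcon
      push_neg at hcon
      have h1 : t^2 * ((α₂-α₀)*(α₂-α₁)) ≤ 0 := mul_nonpos_of_nonneg_of_nonpos ht2pos.le hcon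
      have h2 : A₀*A₁ < 0 := mul_neg_of_neg_of_pos hA0neg hA1pos
      rw [hK2v] at h1
      linarith
    have hcne : ∀ i, 3*(x i)^2 - 1 ≠ 0 := by
      intro i
      rcases hcover i with h | h | h <;> rw [h]
      · rw [hc0K]; exact ne_of_lt hK0neg
      · rw [hc1K]; exact ne_of_gt hK1pos
      · rw [hc2K]; exact ne_of_gt hK2pos
    have hSsum : ∑ i, (3*(x i)^2 - 1)⁻¹
        = (a₀:ℝ)*((α₀-α₁)*(α₀-α₂))⁻¹ + (a₁:ℝ)*((α₁-α₀)*(α₁-α₂))⁻¹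
          + (a₂:ℝ)*((α₂-α₀)*(α₂-α₁))⁻¹ := by
      have h := sum_partition x α₀ α₁ α₂ h01 h02 h12 hcard (fun ξ => (3*ξ^2 - 1)⁻¹)
      simp only [hc0, hc1, hc2] at h
      rw [h, hc0K, hc1K, hc2K]
    have hPpos : 0 < (a₀:ℝ)*A₀ + a₁*A₁ + a₂*A₂ := by
      have hsq : 0 < A₁^2 := by rw [sq]; exact mul_pos hA1pos hA1pos
      linarith [h3sum, sq_nonneg A₀, sq_nonneg A₂, hsq]
    have hSpos : 0 < ∑ i, (3*(x i)^2 - 1)⁻¹ := by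
      rw [hSsum]
      have hA0ne : A₀ ≠ 0 := ne_of_lt hA0neg
      have hA1ne : A₁ ≠ 0 := ne_of_gt hA1pos
      have hA2ne : A₂ ≠ 0 := ne_of_gt hA2pos
      have hK0inv : ((α₀-α₁)*(α₀-α₂))⁻¹ = t^2 / (-(A₁*A₂)) := by
        rw [eq_div_iff (by simp [hA1ne, hA2ne] : -(A₁*A₂) ≠ 0), ← hK0v]
        field_simp
      have hK1inv : ((α₁-α₀)*(α₁-α₂))⁻¹ = t^2 / (-(A₀*A₂)) := by
        rw [eq_div_iff (by simp [hA0ne, hA2ne] : -(A₀*A₂) ≠ 0), ← hK1v]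
        field_simp
      have hK2inv : ((α₂-α₀)*(α₂-α₁))⁻¹ = t^2 / (-(A₀*A₁)) := by
        rw [eq_div_iff (by simp [hA0ne, hA1ne] : -(A₀*A₁) ≠ 0), ← hK2v]
        field_simp
      have heq : (a₀:ℝ)*((α₀-α₁)*(α₀-α₂))⁻¹ + (a₁:ℝ)*((α₁-α₀)*(α₁-α₂))⁻¹
            + (a₂:ℝ)*((α₂-α₀)*(α₂-α₁))⁻¹
          = (t^2*((a₀:ℝ)*A₀ + a₁*A₁ + a₂*A₂)) / (-(A₀*A₁*A₂)) := by
        rw [hK0inv, hK1inv, hK2inv]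
        field_simp
        ring
      rw [heq]
      apply div_pos
      · exact mul_pos ht2pos hPpos
      · rw [show -(A₀*A₁*A₂) = (-A₀)*(A₁*A₂) by ring]
        exact mul_pos (neg_pos.mpr hA0neg) (mul_pos hA1pos hA2pos)
    have hset : {i | 3*(x i)^2 - 1 < 0} = {i | x i = α₀} := by
      ext i
      simp only [Set.mem_setOf_eq]
      constructor
      · intro h
        rcases hcover i with h' | h' | h'
        · exact h'
        · rw [h', hc1K] at h; linarith
        · rw [h', hc2K] at h; linarith
      · intro h
        rw [h, hc0K]; exact hK0neg
    have H := master_pos (fun i => 3*(x i)^2 - 1) hcne hSpos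
    rw [hset, hc0] at H
    exact H
  · -- Case 2 : 2a₁ < a₀ + a₂, index a₂ - 1
    intro hlt
    have hA1neg : A₁ < 0 := by
      rw [hA₁d]
      have h1 : 3*a₁ < N := by omega
      have h2 : (3*(a₁:ℝ)) < N := by exact_mod_cast h1
      linarith
    have hA0neg : A₀ < 0 := lt_of_le_of_lt hA01R hA1neg
    have hA2pos : 0 < A₂ := by linarith
    have htne : t ≠ 0 := by
      rintro rfl
      rw [zero_mul] at ht2
      linarith
    have ht2pos : 0 < t^2 := by positivity
    have hK2neg : (α₂-α₀)*(α₂-α₁) < 0 := by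
      by_contra hcon
      push_neg at hcon
      have h1 : 0 ≤ t^2 * ((α₂-α₀)*(α₂-α₁)) := mul_nonneg ht2pos.le hcon
      have h2 : 0 < A₀*A₁ := mul_pos_of_neg_of_neg hA0neg hA1neg
      rw [hK2v] at h1
      linarith
    have hK0pos : 0 < (α₀-α₁)*(α₀-α₂) := by
      by_contra hcon
      push_neg at hcon
      have h1 : t^2 * ((α₀-α₁)*(α₀-α₂)) ≤ 0 := mul_nonpos_of_nonneg_of_nonpos ht2pos.le hcon
      have h2 : A₁*A₂ < 0 := mul_neg_of_neg_of_pos hA1neg hA2pos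
      rw [hK0v] at h1
      linarith
    have hK1pos : 0 < (α₁-α₀)*(α₁-α₂) := by
      by_contra hcon
      push_neg at hcon
      have h1 : t^2 * ((α₁-α₀)*(α₁-α₂)) ≤ 0 := mul_nonpos_of_nonneg_of_nonpos ht2pos.le hcon
      have h2 : A₀*A₂ < 0 := mul_neg_of_neg_of_pos hA0neg hA2pos
      rw [hK1v] at h1
      linarith
    have hcne : ∀ i, 3*(x i)^2 - 1 ≠ 0 := by
      intro i
      rcases hcover i with h | h | h <;> rw [h]
      · rw [hc0K]; exact ne_of_gt hK0pos
      · rw [hc1K]; exact ne_of_gt hK1pos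
      · rw [hc2K]; exact ne_of_lt hK2neg
    have hSsum : ∑ i, (3*(x i)^2 - 1)⁻¹
        = (a₀:ℝ)*((α₀-α₁)*(α₀-α₂))⁻¹ + (a₁:ℝ)*((α₁-α₀)*(α₁-α₂))⁻¹
          + (a₂:ℝ)*((α₂-α₀)*(α₂-α₁))⁻¹ := by
      have h := sum_partition x α₀ α₁ α₂ h01 h02 h12 hcard (fun ξ => (3*ξ^2 - 1)⁻¹)
      simp only [hc0, hc1, hc2] at h
      rw [h, hc0K, hc1K, hc2K]
    have hPpos : 0 < (a₀:ℝ)*A₀ + a₁*A₁ + a₂*A₂ := by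
      have hsq : 0 < A₁^2 := by rw [sq]; exact mul_pos_of_neg_of_neg hA1neg hA1neg
      linarith [h3sum, sq_nonneg A₀, sq_nonneg A₂, hsq]
    have hSneg : ∑ i, (3*(x i)^2 - 1)⁻¹ < 0 := by
      rw [hSsum]
      have hA0ne : A₀ ≠ 0 := ne_of_lt hA0neg
      have hA1ne : A₁ ≠ 0 := ne_of_lt hA1neg
      have hA2ne : A₂ ≠ 0 := ne_of_gt hA2pos
      have hK0inv : ((α₀-α₁)*(α₀-α₂))⁻¹ = t^2 / (-(A₁*A₂)) := by
        rw [eq_div_iff (by simp [hA1ne, hA2ne] : -(A₁*A₂) ≠ 0), ← hK0v]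
        field_simp
      have hK1inv : ((α₁-α₀)*(α₁-α₂))⁻¹ = t^2 / (-(A₀*A₂)) := by
        rw [eq_div_iff (by simp [hA0ne, hA2ne] : -(A₀*A₂) ≠ 0), ← hK1v]
        field_simp
      have hK2inv : ((α₂-α₀)*(α₂-α₁))⁻¹ = t^2 / (-(A₀*A₁)) := by
        rw [eq_div_iff (by simp [hA0ne, hA1ne] : -(A₀*A₁) ≠ 0), ← hK2v]
        field_simp
      have heq : (a₀:ℝ)*((α₀-α₁)*(α₀-α₂))⁻¹ + (a₁:ℝ)*((α₁-α₀)*(α₁-α₂))⁻¹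
            + (a₂:ℝ)*((α₂-α₀)*(α₂-α₁))⁻¹
          = (t^2*((a₀:ℝ)*A₀ + a₁*A₁ + a₂*A₂)) / (-(A₀*A₁*A₂)) := by
        rw [hK0inv, hK1inv, hK2inv]
        field_simp
        ring
      rw [heq]
      apply div_neg_of_pos_of_neg
      · exact mul_pos ht2pos hPpos
      · rw [neg_lt_zero]
        exact mul_pos (mul_pos_of_neg_of_neg hA0neg hA1neg) hA2pos
    have hset : {i | 3*(x i)^2 - 1 < 0} = {i | x i = α₂} := by
      ext i
      simp only [Set.mem_setOf_eq]
      constructor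
      · intro h
        rcases hcover i with h' | h' | h'
        · rw [h', hc0K] at h; linarith
        · rw [h', hc1K] at h; linarith
        · exact h'
      · intro h
        rw [h, hc2K]; exact hK2neg
    have hne : {i | x i = α₂}.Nonempty := by
      apply Set.nonempty_of_ncard_ne_zero
      rw [hc2]
      omega
    have H := master_neg (fun i => 3*(x i)^2 - 1) hcne hSneg (hset.symm ▸ hne)
    rw [hset, hc2] at H
    exact H
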